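/- arXiv:1109.2818 — 2 statements merged into one kernel-verified Lean document; each statement's English description precedes it below -/
import Mathlib

section
/- Ultimate boundedness: every solution h of the forced ENSO model defined on a half-line [t₀ − τ₂, ∞) satisfies limsup_{t→∞} |h(t)| ≤ max(b₊, −b₋)·(b + c)/d, regardless of the parameters k₀, d_k, ω and of the initial history. -/
lemma enso_abs_tanh_le_one (x : ℝ) : |Real.tanh x| ≤ 1 := by
  rw [Real.tanh_eq_sinh_div_cosh, abs_div, abs_of_pos (Real.cosh_pos x),
    Real.abs_sinh, div_le_one (Real.cosh_pos x)]
  exact le_of_lt (lt_of_lt_of_eq (Real.sinh_lt_cosh |x|) (Real.cosh_abs x))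

/-- Ultimate boundedness: every solution `h` of the forced ENSO model defined
on a half-line `[t₀−τ₂, ∞)` satisfies
`limsup_{t→∞} |h(t)| ≤ max(b₊, −b₋)·(b+c)/d`, regardless of `k₀, d_k, ω`
and of the initial history. -/
theorem enso_ultimate_boundedness (b c d τ₁ τ₂ bp bm k₀ dk ω t₀ : ℝ)
    (hb : 0 < b) (hc : 0 < c) (hd : 0 < d) (hτ₁ : 0 < τ₁) (hτ₂ : 0 < τ₂)
    (hbp : 0 < bp) (hbm : bm < 0)
    (G : ℝ → ℝ)
    (hG : ∀ x : ℝ, G x =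
      if 0 ≤ x then bp * Real.tanh (x / bp) else bm * Real.tanh (x / bm))
    (κ : ℝ → ℝ) (hκ : ∀ t : ℝ, κ t = k₀ + dk * Real.sin (ω * t))
    (h : ℝ → ℝ) (hcont : ContinuousOn h (Set.Ici (t₀ - τ₂)))
    (hde : ∀ t : ℝ, t₀ < t → HasDerivAt h
      (b * G (κ (t - τ₁) * h (t - τ₁)) - c * G (κ (t - τ₂) * h (t - τ₂))
        - d * h t) t) :
    Filter.limsup (fun t => |h t|) Filter.atTop ≤ max bp (-bm) * (b + c) / d := by
  set M0 := max bp (-bm) with hM0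
  have hM0pos : 0 < M0 := lt_max_iff.mpr (Or.inl hbp)
  have hGb : ∀ x, |G x| ≤ M0 := by
    intro x
    rw [hG x]
    split_ifs with hx
    · calc |bp * Real.tanh (x / bp)| = bp * |Real.tanh (x / bp)| := by
            rw [abs_mul, abs_of_pos hbp]
        _ ≤ bp * 1 := mul_le_mul_of_nonneg_left (enso_abs_tanh_le_one _) hbp.le
        _ = bp := mul_one bp
        _ ≤ M0 := le_max_left _ _
    · calc |bm * Real.tanh (x / bm)| = (-bm) * |Real.tanh (x / bm)| := by
            rw [abs_mul, abs_of_neg hbm]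
        _ ≤ (-bm) * 1 := mul_le_mul_of_nonneg_left (enso_abs_tanh_le_one _) (by linarith)
        _ = -bm := mul_one _
        _ ≤ M0 := le_max_right _ _
  set M := M0 * (b + c) with hM
  have hMpos : 0 < M := mul_pos hM0pos (by linarith)
  set K := M / d with hK
  have hKpos : 0 < K := div_pos hMpos hd
  have hdK : d * K = M := by
    rw [hK]; field_simp
  -- the derivative bound
  set w : ℝ → ℝ := fun t =>
    b * G (κ (t - τ₁) * h (t - τ₁)) - c * G (κ (t - τ₂) * h (t - τ₂)) with hwdef
  have hwb : ∀ t, |w t| ≤ M := by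
    intro t
    calc |w t| ≤ |b * G (κ (t - τ₁) * h (t - τ₁))| + |c * G (κ (t - τ₂) * h (t - τ₂))| :=
          abs_sub _ _
      _ ≤ b * M0 + c * M0 := by
          gcongr
          · rw [abs_mul, abs_of_pos hb]
            exact mul_le_mul_of_nonneg_left (hGb _) hb.le
          · rw [abs_mul, abs_of_pos hc]
            exact mul_le_mul_of_nonneg_left (hGb _) hc.le
      _ = M := by rw [hM]; ring
  set s := t₀ + 1 with hs_def
  have hs : t₀ < s := by simp [hs_def]
  have hconts : ContinuousOn h (Set.Ici s) :=
    hcont.mono (Set.Ici_subset_Ici.mpr (by linarith))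
  -- key monotonicity
  have key : ∀ σ : ℝ, σ = 1 ∨ σ = -1 →
      AntitoneOn (fun t => (σ * h t - K) * Real.exp (d * t)) (Set.Ici s) := by
    intro σ hσ
    apply antitoneOn_of_hasDerivWithinAt_nonpos (convex_Ici s)
      (f' := fun x => (σ * (w x - d * h x) - d * K + σ * (d * h x)) * Real.exp (d * x))
    · exact ((continuousOn_const.mul hconts).sub continuousOn_const).mul
        (Real.continuous_exp.comp (continuous_const.mul continuous_id)).continuousOn
    · intro x hx
      rw [interior_Ici] at hx
      have hx' : t₀ < x := lt_trans hs hx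
      have hdh := hde x hx'
      have hexp : HasDerivAt (fun t => Real.exp (d * t)) (Real.exp (d * x) * d) x := by
        simpa using ((hasDerivAt_id x).const_mul d).exp
      have hF : HasDerivAt (fun t => (σ * h t - K) * Real.exp (d * t))
          ((σ * (w x - d * h x)) * Real.exp (d * x)
            + (σ * h x - K) * (Real.exp (d * x) * d)) x :=
        ((hdh.const_mul σ).sub_const K).mul hexp
      have : (σ * (w x - d * h x)) * Real.exp (d * x) + (σ * h x - K) * (Real.exp (d * x) * d)
          = (σ * (w x - d * h x) - d * K + σ * (d * h x)) * Real.exp (d * x) := by ring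
      rw [this] at hF
      exact hF.hasDerivWithinAt
    · intro x hx
      rw [interior_Ici] at hx
      have hE : (0:ℝ) < Real.exp (d * x) := Real.exp_pos _
      have hσw : σ * w x ≤ M := by
        rcases hσ with rfl | rfl
        · simpa using le_trans (le_abs_self _) (hwb x)
        · simpa using le_trans (neg_le_abs _) (hwb x)
      have : σ * (w x - d * h x) - d * K + σ * (d * h x) = σ * w x - d * K := by ring
      rw [this, hdK]
      exact mul_nonpos_of_nonpos_of_nonneg (by linarith) hE.le
  -- pointwise bound for t ≥ s
  set C := |h s| + K with hCdef
  have hbound : ∀ t, s ≤ t → |h t| ≤ K + C * Real.exp (d * (s - t)) := by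
    intro t hts
    have hEt : (0:ℝ) < Real.exp (d * t) := Real.exp_pos _
    have hexpeq : Real.exp (d * (s - t)) = Real.exp (d * s) / Real.exp (d * t) := by
      rw [← Real.exp_sub]; ring_nf
    have main : ∀ σ : ℝ, σ = 1 ∨ σ = -1 → σ * h t ≤ K + C * Real.exp (d * (s - t)) := by
      intro σ hσ
      have h1 : (σ * h t - K) * Real.exp (d * t) ≤ (σ * h s - K) * Real.exp (d * s) :=
        key σ hσ (Set.self_mem_Ici) (Set.mem_Ici.mpr hts) hts
      have h2 : σ * h t - K ≤ (σ * h s - K) * Real.exp (d * (s - t)) := by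
        rw [hexpeq, ← mul_div_assoc, le_div_iff₀ hEt]
        exact h1
      have h3 : σ * h s - K ≤ C := by
        have : σ * h s ≤ |h s| := by
          rcases hσ with rfl | rfl
          · simpa using le_abs_self _
          · simpa using neg_le_abs _
        rw [hCdef]; linarith
      have h4 : (σ * h s - K) * Real.exp (d * (s - t)) ≤ C * Real.exp (d * (s - t)) :=
        mul_le_mul_of_nonneg_right h3 (Real.exp_pos _).le
      linarith
    rw [abs_le]
    constructor
    · have := main (-1) (Or.inr rfl); linarith
    · have := main 1 (Or.inl rfl); simpa using main 1 (Or.inl rfl)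
  -- limsup
  have hlim : Filter.Tendsto (fun t => K + C * Real.exp (d * (s - t)))
      Filter.atTop (nhds K) := by
    have h0 : Filter.Tendsto (fun t : ℝ => d * (s - t)) Filter.atTop Filter.atBot := by
      apply Filter.Tendsto.const_mul_atBot hd
      exact Filter.tendsto_atBot_add_const_left Filter.atTop s Filter.tendsto_neg_atTop_atBot |>.congr (fun x => by ring)
    have h1 : Filter.Tendsto (fun t => C * Real.exp (d * (s - t))) Filter.atTop (nhds 0) := by
      simpa using (Real.tendsto_exp_atBot.comp h0).const_mul C
    simpa using (tendsto_const_nhds (x := K)).add h1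
  have hev : ∀ᶠ t in Filter.atTop, |h t| ≤ K + C * Real.exp (d * (s - t)) :=
    (Filter.eventually_ge_atTop s).mono (fun t ht => hbound t ht)
  have hcob : Filter.IsCoboundedUnder (· ≤ ·) Filter.atTop (fun t => |h t|) :=
    Filter.IsBoundedUnder.isCoboundedUnder_le
      (Filter.isBoundedUnder_of ⟨0, fun t => abs_nonneg (h t)⟩)
  calc Filter.limsup (fun t => |h t|) Filter.atTop
      ≤ Filter.limsup (fun t => K + C * Real.exp (d * (s - t))) Filter.atTop :=
        Filter.limsup_le_limsup hev hcob hlim.isBoundedUnder_le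
    _ = K := hlim.limsup_eq
    _ = max bp (-bm) * (b + c) / d := by rw [hK, hM, hM0]
end

section
/- Pitchfork pair of secondary equilibria past the branch point: if k₀·(b − c) > d, then the equilibrium equation (b − c)·G(k₀·x₀) = d·x₀ has exactly one solution x₊ with x₊ > 0 and exactly one solution x₋ with x₋ < 0, in addition to the trivial solution x₀ = 0. -/
open Real Set Filter

private lemma tanh_hasDerivAt' (x : ℝ) : HasDerivAt Real.tanh (1 / Real.cosh x ^ 2) x := by
  have h : HasDerivAt (fun y => Real.sinh y / Real.cosh y)
      ((Real.cosh x * Real.cosh x - Real.sinh x * Real.sinh x) / Real.cosh x ^ 2) x :=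
    (Real.hasDerivAt_sinh x).div (Real.hasDerivAt_cosh x) (Real.cosh_pos x).ne'
  have heq : Real.tanh = fun y => Real.sinh y / Real.cosh y :=
    funext fun y => Real.tanh_eq_sinh_div_cosh y
  have h1 : Real.cosh x * Real.cosh x - Real.sinh x * Real.sinh x = 1 := by
    nlinarith [Real.cosh_sq_sub_sinh_sq x]
  rw [heq]
  simpa [h1] using h

private lemma tanh_continuous' : Continuous Real.tanh :=
  continuous_iff_continuousAt.2 fun x => (tanh_hasDerivAt' x).continuousAt

private lemma tanh_strictConcaveOn : StrictConcaveOn ℝ (Set.Ici (0:ℝ)) Real.tanh := by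
  apply StrictAntiOn.strictConcaveOn_of_deriv (convex_Ici 0) tanh_continuous'.continuousOn
  have hderiv : deriv Real.tanh = fun x => 1 / Real.cosh x ^ 2 :=
    funext fun x => (tanh_hasDerivAt' x).deriv
  rw [hderiv, interior_Ici]
  intro x hx y hy hxy
  have hcc : Real.cosh x < Real.cosh y := by
    rw [Real.cosh_lt_cosh, abs_of_pos hx, abs_of_pos (hx.trans hxy)]
    exact hxy
  have h2 : Real.cosh x ^ 2 < Real.cosh y ^ 2 := by
    nlinarith [Real.cosh_pos x, Real.cosh_pos y]
  exact one_div_lt_one_div_of_lt (by positivity) h2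

/-- Core lemma: for `r ∈ (0,1)` there is exactly one `t > 0` with `tanh t = r * t`. -/
private lemma tanh_root (r : ℝ) (hr0 : 0 < r) (hr1 : r < 1) :
    ∃! t : ℝ, 0 < t ∧ Real.tanh t = r * t := by
  -- slope of tanh at 0 tends to 1
  have hslope : Tendsto (fun t : ℝ => Real.tanh t / t) (nhdsWithin 0 (Ioi 0)) (nhds 1) := by
    have h0 := (hasDerivAt_iff_tendsto_slope.1 (tanh_hasDerivAt' 0))
    simp only [Real.cosh_zero, one_pow, div_one] at h0
    have hmono : nhdsWithin (0:ℝ) (Ioi 0) ≤ nhdsWithin 0 {(0:ℝ)}ᶜ :=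
      nhdsWithin_mono 0 (fun x hx => ne_of_gt hx)
    refine (h0.mono_left hmono).congr' ?_
    filter_upwards [self_mem_nhdsWithin] with t _
    simp [slope_def_field]
  have hev : ∀ᶠ t in nhdsWithin (0:ℝ) (Ioi 0), r < Real.tanh t / t :=
    hslope.eventually (lt_mem_nhds hr1)
  have hsmall : ∀ᶠ t in nhdsWithin (0:ℝ) (Ioi 0), t < 2 / r :=
    eventually_nhdsWithin_of_eventually_nhds (eventually_lt_nhds (by positivity))
  obtain ⟨t₀, ⟨ht₀r, ht₀small⟩, ht₀pos⟩ :=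
    ((hev.and hsmall).and self_mem_nhdsWithin).exists
  have ht₀pos : (0:ℝ) < t₀ := ht₀pos
  have ht₀ : r * t₀ < Real.tanh t₀ := by
    rw [lt_div_iff₀ ht₀pos] at ht₀r; linarith
  -- far point
  have hfar : Real.tanh (2 / r) < r * (2 / r) := by
    have h1 : Real.tanh (2 / r) < 1 := by
      rw [Real.tanh_eq_sinh_div_cosh, div_lt_one (Real.cosh_pos _)]
      exact Real.sinh_lt_cosh _
    have h2 : r * (2 / r) = 2 := by field_simp
    linarith
  -- IVT for g t = tanh t - r * t on [t₀, 2/r]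
  set g : ℝ → ℝ := fun t => Real.tanh t - r * t with hg
  have hgc : ContinuousOn g (Icc t₀ (2 / r)) :=
    (tanh_continuous'.sub (continuous_const.mul continuous_id)).continuousOn
  have hivt : (0:ℝ) ∈ Icc (g (2 / r)) (g t₀) := by
    constructor <;> simp only [hg] <;> linarith
  obtain ⟨t, htmem, htroot⟩ := intermediate_value_Icc' (le_of_lt ht₀small) hgc hivt
  have htpos : 0 < t := lt_of_lt_of_le ht₀pos htmem.1
  have htval : Real.tanh t = r * t := by
    have : Real.tanh t - r * t = 0 := htroot
    linarith
  -- uniqueness: no two distinct positive roots, by strict concavity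
  have huniq : ∀ t₁ t₂ : ℝ, 0 < t₁ → 0 < t₂ → Real.tanh t₁ = r * t₁ →
      Real.tanh t₂ = r * t₂ → t₁ < t₂ → False := by
    intro t₁ t₂ h1 h2 e1 e2 hlt
    have hτ : 0 < t₁ / t₂ := div_pos h1 h2
    have hτ1 : t₁ / t₂ < 1 := (div_lt_one h2).2 hlt
    have hσ : 0 < 1 - t₁ / t₂ := by linarith
    have hsum : (1 - t₁ / t₂) + t₁ / t₂ = 1 := by ring
    have hkey := tanh_strictConcaveOn.2 (Set.self_mem_Ici)
      (Set.mem_Ici.2 h2.le) (ne_of_lt h2) hσ hτ hsum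
    simp only [smul_eq_mul, mul_zero, Real.tanh_zero, zero_add] at hkey
    have harg : t₁ / t₂ * t₂ = t₁ := div_mul_cancel₀ t₁ (ne_of_gt h2)
    rw [harg, e1, e2] at hkey
    have : t₁ / t₂ * (r * t₂) = r * t₁ := by
      field_simp
    rw [this] at hkey
    exact lt_irrefl _ hkey
  refine ⟨t, ⟨htpos, htval⟩, ?_⟩
  rintro s ⟨hspos, hsval⟩
  rcases lt_trichotomy s t with h | h | h
  · exact absurd (huniq s t hspos htpos hsval htval h) (fun h => h)
  · exact h
  · exact absurd (huniq t s htpos hspos htval hsval h) (fun h => h)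

/-- Positive branch for a general positive saturation parameter `β`. -/
private lemma pos_branch (b c d k₀ β : ℝ) (hbc : c < b) (hd : 0 < d) (hβ : 0 < β)
    (hpast : d < k₀ * (b - c)) :
    ∃! y : ℝ, 0 < y ∧ (b - c) * (β * Real.tanh (k₀ * y / β)) = d * y := by
  have hbc' : 0 < b - c := sub_pos.2 hbc
  have hk : 0 < k₀ := by nlinarith
  set r : ℝ := d / (k₀ * (b - c)) with hr
  have hden : 0 < k₀ * (b - c) := mul_pos hk hbc'
  have hr0 : 0 < r := div_pos hd hden
  have hr1 : r < 1 := (div_lt_one hden).2 hpast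
  obtain ⟨t, ⟨htpos, htval⟩, htuniq⟩ := tanh_root r hr0 hr1
  have hiff : ∀ y : ℝ, 0 < y →
      ((b - c) * (β * Real.tanh (k₀ * y / β)) = d * y ↔
        Real.tanh (k₀ * y / β) = r * (k₀ * y / β)) := by
    intro y hy
    constructor
    · intro h
      have : (b - c) * β * Real.tanh (k₀ * y / β) = d * y := by linarith [h]; 
      field_simp [hr]
      have hrr : k₀ * (b - c) * r = d := by rw [hr]; field_simp
      have h2 : (b - c) * (β * Real.tanh (k₀ * y / β) - k₀ * y * r) = 0 := by
        linear_combination this - y * hrr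
      have h3 := (mul_eq_zero.1 h2).resolve_left hbc'.ne'
      linarith [h3]
    · intro h
      have : Real.tanh (k₀ * y / β) * (k₀ * (b - c)) = d * (k₀ * y / β) * 1 := by
        rw [h, hr]; field_simp
      field_simp at this
      nlinarith [this]
  refine ⟨β * t / k₀, ⟨by positivity, ?_⟩, ?_⟩
  · have harg : k₀ * (β * t / k₀) / β = t := by field_simp
    exact (hiff _ (by positivity)).2 (by rw [harg]; exact htval)
  · rintro y ⟨hypos, hyval⟩
    have hs : Real.tanh (k₀ * y / β) = r * (k₀ * y / β) := (hiff y hypos).1 hyval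
    have hspos : 0 < k₀ * y / β := by positivity
    have := htuniq _ ⟨hspos, hs⟩
    field_simp at this ⊢
    linarith [this]

/-- Pitchfork pair of secondary equilibria past the branch point: if
`k₀(b−c) > d`, then the equilibrium equation `(b−c)·G(k₀·x₀) = d·x₀` has
exactly one positive solution and exactly one negative solution, in addition
to the trivial solution `x₀ = 0`. -/
theorem enso_pitchfork_pair (b c d k₀ bp bm : ℝ)
    (hb : 0 < b) (hbc : c < b) (hc : 0 < c) (hd : 0 < d) (hk₀ : 0 ≤ k₀)
    (hbp : 0 < bp) (hbm : bm < 0)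
    (G : ℝ → ℝ)
    (hG : ∀ x : ℝ, G x =
      if 0 ≤ x then bp * Real.tanh (x / bp) else bm * Real.tanh (x / bm))
    (hpast : d < k₀ * (b - c)) :
    (b - c) * G (k₀ * 0) = d * 0 ∧
      (∃! x : ℝ, 0 < x ∧ (b - c) * G (k₀ * x) = d * x) ∧
      (∃! x : ℝ, x < 0 ∧ (b - c) * G (k₀ * x) = d * x) := by
  have hbc' : 0 < b - c := sub_pos.2 hbc
  have hk : 0 < k₀ := by nlinarith
  refine ⟨by simp [hG], ?_, ?_⟩
  · -- positive branch
    obtain ⟨y, ⟨hypos, hyval⟩, hyuniq⟩ := pos_branch b c d k₀ bp hbc hd hbp hpast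
    have hGpos : ∀ x : ℝ, 0 < x → G (k₀ * x) = bp * Real.tanh (k₀ * x / bp) := by
      intro x hx
      rw [hG]
      rw [if_pos (by positivity)]
    refine ⟨y, ⟨hypos, by rw [hGpos y hypos]; exact hyval⟩, ?_⟩
    rintro x ⟨hxpos, hxval⟩
    exact hyuniq x ⟨hxpos, by rw [← hGpos x hxpos]; exact hxval⟩
  · -- negative branch
    set β : ℝ := -bm with hβdef
    have hβ : 0 < β := by simp [hβdef]; linarith
    obtain ⟨y, ⟨hypos, hyval⟩, hyuniq⟩ := pos_branch b c d k₀ β hbc hd hβ hpast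
    have hGneg : ∀ x : ℝ, x < 0 → G (k₀ * x) = -(β * Real.tanh (k₀ * (-x) / β)) := by
      intro x hx
      have hneg : k₀ * x < 0 := mul_neg_of_pos_of_neg hk hx
      rw [hG, if_neg (not_le.2 hneg)]
      have harg : k₀ * x / bm = k₀ * (-x) / β := by
        rw [hβdef]; field_simp
      rw [harg, hβdef]
      ring
    refine ⟨-y, ⟨by linarith, ?_⟩, ?_⟩
    · rw [hGneg (-y) (by linarith), neg_neg]
      rw [mul_neg]
      rw [mul_neg]
      rw [hyval]
    · rintro x ⟨hxneg, hxval⟩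
      rw [hGneg x hxneg] at hxval
      have : (b - c) * (β * Real.tanh (k₀ * (-x) / β)) = d * (-x) := by linarith
      have := hyuniq (-x) ⟨by linarith, this⟩
      linarith
end
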